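/- For the path graph P_3 with adjacency matrix A, the transition amplitude between the two end vertices satisfies ⟨3| exp(-itA) |1⟩ = -sin²(t/√2); in particular perfect state transfer between the end vertices occurs at time t = π/√2. -/

import Mathlib

open Matrix

noncomputable section

private def c : ℂ := (Real.sqrt 2 : ℝ)

private lemma hc2 : c * c = 2 := by
  simp only [c, ← Complex.ofReal_mul, Real.mul_self_sqrt (by norm_num : (0:ℝ) ≤ 2)]
  norm_num

private def Umat : Matrix (Fin 3) (Fin 3) ℂ := !![1, 1, 1; c, 0, -c; 1, -1, 1]
private def Vmat : Matrix (Fin 3) (Fin 3) ℂ :=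
  !![1/4, c/4, 1/4; 1/2, 0, -1/2; 1/4, -(c/4), 1/4]

private lemma diag_eq (a b d : ℂ) :
    Matrix.diagonal ![a, b, d] = !![a,0,0; 0,b,0; 0,0,d] := by
  ext i j
  fin_cases i <;> fin_cases j <;> simp [Matrix.diagonal_apply] <;> rfl

private lemma exp_vec (a b d : ℂ) :
    NormedSpace.exp ![a, b, d] = ![Complex.exp a, Complex.exp b, Complex.exp d] := by
  rw [Pi.exp_def]
  funext i
  fin_cases i <;> simp [← Complex.exp_eq_exp_ℂ]

private lemma hUV : Umat * Vmat = 1 := by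
  ext i j
  fin_cases i <;> fin_cases j <;>
    simp [Umat, Vmat, Matrix.mul_apply, Fin.sum_univ_three] <;>
    first
    | ring1
    | linear_combination hc2/2
    | linear_combination -hc2/2
    | linear_combination hc2/4
    | linear_combination -hc2/4

private lemma hVU : Vmat * Umat = 1 := by
  ext i j
  fin_cases i <;> fin_cases j <;>
    simp [Umat, Vmat, Matrix.mul_apply, Fin.sum_univ_three] <;>
    first
    | ring1
    | linear_combination hc2/2
    | linear_combination -hc2/2
    | linear_combination hc2/4
    | linear_combination -hc2/4

private def Uunit : (Matrix (Fin 3) (Fin 3) ℂ)ˣ := ⟨Umat, Vmat, hUV, hVU⟩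

private lemma decomp (t : ℝ) :
    (-(Complex.I * t)) • (!![0, 1, 0; 1, 0, 1; 0, 1, 0] : Matrix (Fin 3) (Fin 3) ℂ)
      = Umat * Matrix.diagonal ![-(Complex.I * t) * c, 0, (Complex.I * t) * c] * Vmat := by
  rw [diag_eq]
  ext i j
  fin_cases i <;> fin_cases j <;>
    simp [Umat, Vmat, Matrix.mul_apply, Fin.sum_univ_three] <;>
    first
    | ring1
    | linear_combination (Complex.I*t/2)*hc2
    | linear_combination (-(Complex.I*t)/2)*hc2
    | linear_combination (Complex.I*t/4)*hc2
    | linear_combination (-(Complex.I*t)/4)*hc2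
    | linear_combination (Complex.I*t)*hc2
    | linear_combination (-(Complex.I*t))*hc2

theorem p3_amplitude_and_pst :
    (∀ t : ℝ, (NormedSpace.exp ((-(Complex.I * t)) •
        (!![0, 1, 0; 1, 0, 1; 0, 1, 0] : Matrix (Fin 3) (Fin 3) ℂ))) 2 0
      = -(Complex.sin ((t / Real.sqrt 2 : ℝ) : ℂ)) ^ 2) ∧
    ‖(NormedSpace.exp ((-(Complex.I * (Real.pi / Real.sqrt 2 : ℝ))) •
      (!![0, 1, 0; 1, 0, 1; 0, 1, 0] : Matrix (Fin 3) (Fin 3) ℂ))) 2 0‖ = 1 := by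
  have hexp : ∀ z : ℂ, NormedSpace.exp z = Complex.exp z := fun z => by
    rw [← Complex.exp_eq_exp_ℂ]
  have main : ∀ t : ℝ, (NormedSpace.exp ((-(Complex.I * t)) •
        (!![0, 1, 0; 1, 0, 1; 0, 1, 0] : Matrix (Fin 3) (Fin 3) ℂ))) 2 0
      = -(Complex.sin ((t / Real.sqrt 2 : ℝ) : ℂ)) ^ 2 := by
    intro t
    rw [decomp t]
    have h1 := Matrix.exp_units_conj Uunit
      (Matrix.diagonal ![-(Complex.I * t) * c, 0, (Complex.I * t) * c])
    have hcoe : (↑Uunit : Matrix (Fin 3) (Fin 3) ℂ) = Umat := rfl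
    have hcoe' : (↑Uunit⁻¹ : Matrix (Fin 3) (Fin 3) ℂ) = Vmat := rfl
    rw [hcoe, hcoe'] at h1
    rw [h1, Matrix.exp_diagonal]
    have entry : (Umat * Matrix.diagonal (NormedSpace.exp
          ![-(Complex.I * t) * c, 0, (Complex.I * t) * c]) * Vmat) 2 0
        = Complex.exp (-(Complex.I * t) * c) / 4 - 1/2
          + Complex.exp ((Complex.I * t) * c) / 4 := by
      rw [exp_vec, diag_eq]
      simp [Umat, Vmat, Matrix.mul_apply, Fin.sum_univ_three, Complex.exp_zero]
      ring
    rw [entry]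
    have hs : ((t / Real.sqrt 2 : ℝ) : ℂ) * 2 = (t : ℂ) * c := by
      have h2 : (Real.sqrt 2 : ℝ) ≠ 0 := by positivity
      simp only [c]
      have h2' : ((Real.sqrt 2 : ℝ) : ℂ) ≠ 0 := Complex.ofReal_ne_zero.mpr h2
      push_cast
      rw [div_mul_eq_mul_div, div_eq_iff h2', mul_assoc, ← Complex.ofReal_mul,
        Real.mul_self_sqrt (by norm_num)]
      push_cast; ring
    set s : ℂ := ((t / Real.sqrt 2 : ℝ) : ℂ) with hsdef
    rw [Complex.sin]
    have e1 : Complex.exp (-(Complex.I * t) * c) = Complex.exp (-s * Complex.I) ^ 2 := by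
      rw [sq, ← Complex.exp_add]
      congr 1
      rw [show -s * Complex.I + -s * Complex.I = -(s * 2) * Complex.I by ring, hs]
      ring
    have e2 : Complex.exp ((Complex.I * t) * c) = Complex.exp (s * Complex.I) ^ 2 := by
      rw [sq, ← Complex.exp_add]
      congr 1
      rw [show s * Complex.I + s * Complex.I = (s * 2) * Complex.I by ring, hs]
      ring
    have e3 : Complex.exp (-s * Complex.I) * Complex.exp (s * Complex.I) = 1 := by
      rw [← Complex.exp_add]; simp
    rw [e1, e2]
    linear_combination ((Complex.exp (-s * Complex.I)^2 + Complex.exp (s * Complex.I)^2)/4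
      - Complex.exp (-s * Complex.I) * Complex.exp (s * Complex.I)/2) * Complex.I_sq
      + (1/2) * e3
  refine ⟨main, ?_⟩
  rw [main (Real.pi / Real.sqrt 2)]
  have h : (Real.pi / Real.sqrt 2) / Real.sqrt 2 = Real.pi / 2 := by
    rw [div_div, Real.mul_self_sqrt (by norm_num)]
  rw [h]
  simp
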